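/- arXiv:1610.00565 — 3 statements merged into one kernel-verified Lean document; each statement's English description precedes it below -/
import Mathlib

section
/- Let $N$ be a nonzero submodule of a comultiplication $R$-module $M$. If $\mathrm{Ann}_R(N)$ is a 2-absorbing primary ideal of $R$, then $N$ is a strongly 2-absorbing secondary submodule of $M$. -/
open Pointwise

variable {R : Type*} [CommRing R] {M : Type*} [AddCommGroup M] [Module R M]

/-- A nonzero submodule `S` is second if every ring element acts on it
surjectively (`a • S = S`) or as zero (`a • S = ⊥`). -/
def IsSecond (S : Submodule R M) : Prop :=
  S ≠ ⊥ ∧ ∀ a : R, a • S = S ∨ a • S = ⊥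

/-- The second radical of `N`: the sum of all second submodules contained in `N`. -/
def secRad (N : Submodule R M) : Submodule R M :=
  sSup {S : Submodule R M | IsSecond S ∧ S ≤ N}

/-- A proper submodule `L` is completely irreducible if whenever `L` is an
intersection of a family of submodules, it equals one of them. -/
def CompletelyIrreducible (L : Submodule R M) : Prop :=
  L ≠ ⊤ ∧ ∀ s : Set (Submodule R M), L = sInf s → L ∈ s

/-- 2-absorbing secondary submodule. -/
def Is2AbsSecondary (N : Submodule R M) : Prop :=
  N ≠ ⊥ ∧ ∀ a b : R, ∀ L : Submodule R M, CompletelyIrreducible L →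
    (a * b) • N ≤ L →
    a • secRad N ≤ L ∨ b • secRad N ≤ L ∨ (a * b) • N = ⊥

/-- Strongly 2-absorbing secondary submodule. -/
def IsS2AbsSecondary (N : Submodule R M) : Prop :=
  N ≠ ⊥ ∧ ∀ a b : R, ∀ K : Submodule R M,
    (a * b) • N ≤ K →
    a • secRad N ≤ K ∨ b • secRad N ≤ K ∨ (a * b) • N = ⊥

/-- Strongly 2-absorbing second submodule. -/
def IsS2AbsSecond (N : Submodule R M) : Prop :=
  N ≠ ⊥ ∧ ∀ a b : R, ∀ K : Submodule R M,
    (a * b) • N ≤ K →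
    a • N ≤ K ∨ b • N ≤ K ∨ (a * b) • N = ⊥

/-- A 2-absorbing primary ideal. -/
def Is2AbsPrimaryIdeal (I : Ideal R) : Prop :=
  I ≠ ⊤ ∧ ∀ a b c : R, a * b * c ∈ I →
    a * b ∈ I ∨ a * c ∈ I.radical ∨ b * c ∈ I.radical

/-- A comultiplication module: every submodule equals `(0 :_M Ann(N))`. -/
def IsComultiplication (R M : Type*) [CommRing R] [AddCommGroup M] [Module R M] : Prop :=
  ∀ N : Submodule R M, ∀ m : M, m ∈ N ↔ ∀ r ∈ N.annihilator, r • m = 0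

/-- A secondary submodule: each `r : R` satisfies `r • N = N` or `r ^ t • N = ⊥`. -/
def IsSecondarySubmodule (N : Submodule R M) : Prop :=
  N ≠ ⊥ ∧ ∀ r : R, r • N = N ∨ ∃ t : ℕ, 0 < t ∧ r ^ t • N = ⊥


private lemma mem_psmul {a : R} {S : Submodule R M} {m : M} :
    m ∈ a • S ↔ ∃ s ∈ S, a • s = m := by
  rw [← SetLike.mem_coe, Submodule.coe_pointwise_smul]
  exact Set.mem_smul_set

private lemma pow_smul_eq' {x : R} {S : Submodule R M} (h : x • S = S) :
    ∀ n : ℕ, x ^ n • S = S := by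
  intro n
  induction n with
  | zero => simp
  | succ k ih => rw [pow_succ, mul_smul, h, ih]

private lemma rad_subset_ann_sec {N : Submodule R M} {x : R}
    (hx : x ∈ (Submodule.annihilator N).radical) :
    ∀ s ∈ secRad N, x • s = 0 := by
  rw [Ideal.mem_radical_iff] at hx
  obtain ⟨n, hn⟩ := hx
  have hle : secRad N ≤ Submodule.torsionBy R M x := by
    apply sSup_le
    rintro S ⟨⟨hSne, hdich⟩, hSN⟩
    rcases hdich x with h1 | h1
    · exfalso
      apply hSne
      rw [eq_bot_iff]
      intro s hs
      rw [← pow_smul_eq' h1 n] at hs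
      rw [mem_psmul] at hs
      obtain ⟨t, ht, rfl⟩ := hs
      have ht0 := Submodule.mem_annihilator.mp hn t (hSN ht)
      simp [ht0]
    · intro s hs
      rw [Submodule.mem_torsionBy_iff]
      have h2 : x • s ∈ x • S := Submodule.smul_mem_pointwise_smul s x S hs
      rw [h1] at h2
      simpa using h2
  intro s hs
  exact (Submodule.mem_torsionBy_iff _ _).mp (hle hs)

theorem stmt6 (hM : IsComultiplication R M) (N : Submodule R M) (hN : N ≠ ⊥)
    (h : Is2AbsPrimaryIdeal (Submodule.annihilator N)) :
    IsS2AbsSecondary N := by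
  obtain ⟨hIne, hI⟩ := h
  refine ⟨hN, fun a b K hK => ?_⟩
  by_cases h0 : (a * b) • N = ⊥
  · exact Or.inr (Or.inr h0)
  have habnn : a * b ∉ N.annihilator := by
    intro hmem
    apply h0
    rw [eq_bot_iff]
    intro m hm
    rw [mem_psmul] at hm
    obtain ⟨t, ht, rfl⟩ := hm
    simpa using Submodule.mem_annihilator.mp hmem t ht
  have hdich : ∀ r ∈ K.annihilator,
      a * r ∈ (Submodule.annihilator N).radical ∨ b * r ∈ (Submodule.annihilator N).radical := by
    intro r hr
    have habr : a * b * r ∈ N.annihilator := by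
      rw [Submodule.mem_annihilator]
      intro m hm
      have h1 : (a * b) • m ∈ K := hK (Submodule.smul_mem_pointwise_smul m (a * b) N hm)
      calc (a * b * r) • m = r • ((a * b) • m) := by rw [mul_comm, mul_smul]
        _ = 0 := Submodule.mem_annihilator.mp hr _ h1
    rcases hI a b r habr with h1 | h1 | h1
    · exact absurd h1 habnn
    · exact Or.inl h1
    · exact Or.inr h1
  have key : ∀ c : R, ¬ c • secRad N ≤ K →
      ∃ r ∈ K.annihilator, ∃ s ∈ secRad N, (c * r) • s ≠ 0 := by
    intro c hc
    rw [SetLike.not_le_iff_exists] at hc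
    obtain ⟨m, hm, hmK⟩ := hc
    rw [mem_psmul] at hm
    obtain ⟨s, hs, rfl⟩ := hm
    have h2 : ¬ ∀ r ∈ K.annihilator, r • (c • s) = 0 := fun hh => hmK ((hM K _).mpr hh)
    push_neg at h2
    obtain ⟨r, hr, hr0⟩ := h2
    exact ⟨r, hr, s, hs, by rwa [mul_comm, mul_smul]⟩
  by_contra hcon
  push_neg at hcon
  obtain ⟨r1, hr1, s1, hs1, hns1⟩ := key a hcon.1
  obtain ⟨r2, hr2, s2, hs2, hns2⟩ := key b hcon.2.1
  have hbr1 : b * r1 ∈ (Submodule.annihilator N).radical := by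
    rcases hdich r1 hr1 with h1 | h1
    · exact absurd (rad_subset_ann_sec h1 s1 hs1) hns1
    · exact h1
  have har2 : a * r2 ∈ (Submodule.annihilator N).radical := by
    rcases hdich r2 hr2 with h1 | h1
    · exact h1
    · exact absurd (rad_subset_ann_sec h1 s2 hs2) hns2
  rcases hdich (r1 + r2) (add_mem hr1 hr2) with h1 | h1
  · apply hns1
    have e1 := rad_subset_ann_sec h1 s1 hs1
    have e2 := rad_subset_ann_sec har2 s1 hs1
    rw [mul_add, add_smul, e2, add_zero] at e1
    exact e1
  · apply hns2
    have e1 := rad_subset_ann_sec h1 s2 hs2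
    have e2 := rad_subset_ann_sec hbr1 s2 hs2
    rw [mul_add, add_smul, e2, zero_add] at e1
    exact e1
end

section
/- Let $f : M \to M'$ be an injective homomorphism of $R$-modules. If $N$ is a strongly 2-absorbing secondary submodule of $M$, then $f(N)$ is a strongly 2-absorbing secondary submodule of $M'$. Conversely, if $N'$ is a strongly 2-absorbing secondary submodule of $M'$ with $N' \subseteq f(M)$, then $f^{-1}(N')$ is a strongly 2-absorbing secondary submodule of $M$. -/
open Pointwise

variable {R : Type*} [CommRing R] {M : Type*} [AddCommGroup M] [Module R M]

/-- A secondary submodule: each `r : R` satisfies `r • N = N` or `r ^ t • N = ⊥`. -/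
lemma isSecond_map {M' : Type*} [AddCommGroup M'] [Module R M']
    (f : M →ₗ[R] M') (hf : Function.Injective f) {S : Submodule R M}
    (hS : IsSecond S) : IsSecond (S.map f) := by
  have hmi := Submodule.map_injective_of_injective (f := f) hf
  constructor
  · intro h
    exact hS.1 (hmi (by simpa using h))
  · intro a
    rcases hS.2 a with h | h
    · left; rw [← Submodule.map_pointwise_smul, h]
    · right; rw [← Submodule.map_pointwise_smul, h, Submodule.map_bot]

lemma isSecond_comap {M' : Type*} [AddCommGroup M'] [Module R M']
    (f : M →ₗ[R] M') (hf : Function.Injective f) {S : Submodule R M'}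
    (hS : IsSecond S) (hle : S ≤ LinearMap.range f) : IsSecond (S.comap f) := by
  have hmi := Submodule.map_injective_of_injective (f := f) hf
  have hmc : (S.comap f).map f = S := by
    rw [Submodule.map_comap_eq, inf_eq_right.mpr hle]
  constructor
  · intro h
    apply hS.1; rw [← hmc, h, Submodule.map_bot]
  · intro a
    rcases hS.2 a with h | h
    · left; apply hmi; rw [Submodule.map_pointwise_smul, hmc, h]
    · right; apply hmi; rw [Submodule.map_pointwise_smul, hmc, h, Submodule.map_bot]

lemma secRad_map {M' : Type*} [AddCommGroup M'] [Module R M']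
    (f : M →ₗ[R] M') (hf : Function.Injective f) (N : Submodule R M) :
    secRad (N.map f) = (secRad N).map f := by
  apply le_antisymm
  · apply sSup_le
    rintro S ⟨hS, hSN⟩
    have hle : S ≤ LinearMap.range f := hSN.trans (LinearMap.map_le_range)
    have hmc : (S.comap f).map f = S := by
      rw [Submodule.map_comap_eq, inf_eq_right.mpr hle]
    rw [← hmc]
    apply Submodule.map_mono
    apply le_sSup
    refine ⟨isSecond_comap f hf hS hle, ?_⟩
    calc S.comap f ≤ (N.map f).comap f := Submodule.comap_mono hSN
      _ = N := Submodule.comap_map_eq_of_injective hf N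
  · rw [Submodule.map_le_iff_le_comap]
    apply sSup_le
    rintro S ⟨hS, hSN⟩
    rw [← Submodule.map_le_iff_le_comap]
    exact le_sSup ⟨isSecond_map f hf hS, Submodule.map_mono hSN⟩

theorem stmt15 {M' : Type*} [AddCommGroup M'] [Module R M']
    (f : M →ₗ[R] M') (hf : Function.Injective f) :
    (∀ N : Submodule R M, IsS2AbsSecondary N → IsS2AbsSecondary (N.map f)) ∧
    (∀ N' : Submodule R M', IsS2AbsSecondary N' → N' ≤ LinearMap.range f →
      IsS2AbsSecondary (N'.comap f)) := by
  have hmi := Submodule.map_injective_of_injective (f := f) hf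
  constructor
  · rintro N ⟨hN0, hN⟩
    refine ⟨fun h => hN0 (hmi (by simpa using h)), ?_⟩
    intro a b K hK
    have hK' : (a * b) • N ≤ K.comap f := by
      rw [← Submodule.map_le_iff_le_comap, Submodule.map_pointwise_smul]
      exact hK
    rcases hN a b (K.comap f) hK' with h | h | h
    · left
      rw [secRad_map f hf, ← Submodule.map_pointwise_smul,
        Submodule.map_le_iff_le_comap]
      exact h
    · right; left
      rw [secRad_map f hf, ← Submodule.map_pointwise_smul,
        Submodule.map_le_iff_le_comap]
      exact h
    · right; right
      rw [← Submodule.map_pointwise_smul, h, Submodule.map_bot]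
  · rintro N' ⟨hN0, hN⟩ hle
    have hmc : (N'.comap f).map f = N' := by
      rw [Submodule.map_comap_eq, inf_eq_right.mpr hle]
    refine ⟨fun h => hN0 (by rw [← hmc, h, Submodule.map_bot]), ?_⟩
    intro a b K hK
    have hK' : (a * b) • N' ≤ K.map f := by
      rw [← hmc, ← Submodule.map_pointwise_smul]
      exact Submodule.map_mono hK
    have hsec : secRad N' = (secRad (N'.comap f)).map f := by
      rw [← secRad_map f hf, hmc]
    have key : ∀ c : R, c • secRad N' ≤ K.map f → c • secRad (N'.comap f) ≤ K := by
      intro c hc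
      rw [hsec, ← Submodule.map_pointwise_smul] at hc
      intro x hx
      rcases (Submodule.map_mono (le_refl _) : (c • secRad (N'.comap f)).map f ≤ (c • secRad (N'.comap f)).map f) with _
      have : f x ∈ K.map f := hc ⟨x, hx, rfl⟩
      rcases this with ⟨y, hy, hxy⟩
      rwa [← hf hxy]
    rcases hN a b (K.map f) hK' with h | h | h
    · exact Or.inl (key a h)
    · exact Or.inr (Or.inl (key b h))
    · right; right
      apply hmi
      rw [Submodule.map_pointwise_smul, hmc, h, Submodule.map_bot]
end

section
/- Let $R = R_1 \times R_2$ be a product of commutative rings, $M_1$ an $R_1$-module, $M_2$ an $R_2$-module, and $M = M_1 \times M_2$ the $R$-module with componentwise action. A submodule $N$ of $M$ is a second submodule if and only if $N = S_1 \times 0$ for a second submodule $S_1$ of $M_1$ or $N = 0 \times S_2$ for a second submodule $S_2$ of $M_2$. Consequently, for any submodule $N_1 \times N_2$ of $M$, $\mathrm{sec}(N_1 \times N_2) = \mathrm{sec}(N_1) \times \mathrm{sec}(N_2)$. -/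
open Pointwise

variable {R : Type*} [CommRing R] {M : Type*} [AddCommGroup M] [Module R M]

section Prod

variable {R₁ R₂ : Type*} [CommRing R₁] [CommRing R₂]
  {M₁ M₂ : Type*} [AddCommGroup M₁] [AddCommGroup M₂]
  [Module R₁ M₁] [Module R₂ M₂]

/-- The componentwise module structure of `M₁ × M₂` over `R₁ × R₂`. -/
instance prodProdModule : Module (R₁ × R₂) (M₁ × M₂) where
  smul r m := (r.1 • m.1, r.2 • m.2)
  one_smul m := Prod.ext (one_smul _ _) (one_smul _ _)
  mul_smul r s m := Prod.ext (mul_smul _ _ _) (mul_smul _ _ _)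
  smul_zero r := Prod.ext (smul_zero _) (smul_zero _)
  smul_add r m n := Prod.ext (smul_add _ _ _) (smul_add _ _ _)
  add_smul r s m := Prod.ext (add_smul _ _ _) (add_smul _ _ _)
  zero_smul m := Prod.ext (zero_smul _ _) (zero_smul _ _)

@[simp] theorem prod_smul_def (r : R₁ × R₂) (m : M₁ × M₂) :
    r • m = (r.1 • m.1, r.2 • m.2) := rfl

/-- The product of a submodule of `M₁` and a submodule of `M₂`, as a submodule
of the `(R₁ × R₂)`-module `M₁ × M₂`. -/
def prodSub (N₁ : Submodule R₁ M₁) (N₂ : Submodule R₂ M₂) :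
    Submodule (R₁ × R₂) (M₁ × M₂) where
  carrier := N₁ ×ˢ N₂
  add_mem' := fun ha hb => ⟨N₁.add_mem ha.1 hb.1, N₂.add_mem ha.2 hb.2⟩
  zero_mem' := ⟨N₁.zero_mem, N₂.zero_mem⟩
  smul_mem' := fun c _ h => ⟨N₁.smul_mem c.1 h.1, N₂.smul_mem c.2 h.2⟩

theorem mem_prodSub {N₁ : Submodule R₁ M₁} {N₂ : Submodule R₂ M₂} {x : M₁ × M₂} :
    x ∈ prodSub N₁ N₂ ↔ x.1 ∈ N₁ ∧ x.2 ∈ N₂ := Iff.rfl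

theorem mem_smul_iff {a : R₁ × R₂} {S : Submodule (R₁ × R₂) (M₁ × M₂)} {x : M₁ × M₂} :
    x ∈ a • S ↔ ∃ y ∈ S, a • y = x := by
  rw [← SetLike.mem_coe, Submodule.coe_pointwise_smul]
  exact Set.mem_smul_set

theorem mem_smul_iff₁ {a : R₁} {S : Submodule R₁ M₁} {x : M₁} :
    x ∈ a • S ↔ ∃ y ∈ S, a • y = x := by
  rw [← SetLike.mem_coe, Submodule.coe_pointwise_smul]
  exact Set.mem_smul_set

theorem mem_smul_iff₂ {a : R₂} {S : Submodule R₂ M₂} {x : M₂} :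
    x ∈ a • S ↔ ∃ y ∈ S, a • y = x := by
  rw [← SetLike.mem_coe, Submodule.coe_pointwise_smul]
  exact Set.mem_smul_set

theorem smul_prodSub (a : R₁ × R₂) (N₁ : Submodule R₁ M₁) (N₂ : Submodule R₂ M₂) :
    a • prodSub N₁ N₂ = prodSub (a.1 • N₁) (a.2 • N₂) := by
  ext ⟨x, y⟩
  simp only [mem_smul_iff, mem_prodSub, mem_smul_iff₁, mem_smul_iff₂]
  constructor
  · rintro ⟨⟨u, v⟩, ⟨hu, hv⟩, h⟩
    rw [prod_smul_def] at h
    exact ⟨⟨u, hu, congrArg Prod.fst h⟩, ⟨v, hv, congrArg Prod.snd h⟩⟩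
  · rintro ⟨⟨u, hu, hux⟩, ⟨v, hv, hvy⟩⟩
    exact ⟨(u, v), ⟨hu, hv⟩, by rw [prod_smul_def]; exact Prod.ext hux hvy⟩

theorem prodSub_mono {N₁ P₁ : Submodule R₁ M₁} {N₂ P₂ : Submodule R₂ M₂}
    (h₁ : N₁ ≤ P₁) (h₂ : N₂ ≤ P₂) : prodSub N₁ N₂ ≤ prodSub P₁ P₂ :=
  fun _ hx => ⟨h₁ hx.1, h₂ hx.2⟩

theorem prodSub_eq_bot_iff {N₁ : Submodule R₁ M₁} {N₂ : Submodule R₂ M₂} :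
    prodSub N₁ N₂ = ⊥ ↔ N₁ = ⊥ ∧ N₂ = ⊥ := by
  constructor
  · intro h
    constructor
    · ext x
      simp only [Submodule.mem_bot]
      constructor
      · intro hx
        have : (x, (0 : M₂)) ∈ prodSub N₁ N₂ := ⟨hx, N₂.zero_mem⟩
        rw [h, Submodule.mem_bot] at this
        exact congrArg Prod.fst this
      · rintro rfl; exact N₁.zero_mem
    · ext y
      simp only [Submodule.mem_bot]
      constructor
      · intro hy
        have : ((0 : M₁), y) ∈ prodSub N₁ N₂ := ⟨N₁.zero_mem, hy⟩
        rw [h, Submodule.mem_bot] at this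
        exact congrArg Prod.snd this
      · rintro rfl; exact N₂.zero_mem
  · rintro ⟨rfl, rfl⟩
    ext ⟨x, y⟩
    simp only [mem_prodSub, Submodule.mem_bot, Prod.mk_eq_zero]

theorem prodSub_inj {N₁ P₁ : Submodule R₁ M₁} {N₂ P₂ : Submodule R₂ M₂}
    (h : prodSub N₁ N₂ = prodSub P₁ P₂) : N₁ = P₁ ∧ N₂ = P₂ := by
  constructor
  · ext x
    have := SetLike.ext_iff.mp h (x, (0 : M₂))
    simp only [mem_prodSub] at this
    constructor
    · intro hx; exact ((this.mp ⟨hx, N₂.zero_mem⟩)).1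
    · intro hx; exact ((this.mpr ⟨hx, P₂.zero_mem⟩)).1
  · ext y
    have := SetLike.ext_iff.mp h ((0 : M₁), y)
    simp only [mem_prodSub] at this
    constructor
    · intro hy; exact ((this.mp ⟨N₁.zero_mem, hy⟩)).2
    · intro hy; exact ((this.mpr ⟨P₁.zero_mem, hy⟩)).2

/-- The left part of a submodule of the product. -/
def leftPart (N : Submodule (R₁ × R₂) (M₁ × M₂)) : Submodule R₁ M₁ where
  carrier := {x | (x, (0 : M₂)) ∈ N}
  add_mem' := fun {a b} ha hb => by
    have := N.add_mem ha hb
    simpa using this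
  zero_mem' := N.zero_mem
  smul_mem' := fun c x hx => by
    have := N.smul_mem (c, (0 : R₂)) hx
    simpa using this

/-- The right part of a submodule of the product. -/
def rightPart (N : Submodule (R₁ × R₂) (M₁ × M₂)) : Submodule R₂ M₂ where
  carrier := {y | ((0 : M₁), y) ∈ N}
  add_mem' := fun {a b} ha hb => by
    have := N.add_mem ha hb
    simpa using this
  zero_mem' := N.zero_mem
  smul_mem' := fun c y hy => by
    have := N.smul_mem ((0 : R₁), c) hy
    simpa using this

theorem eq_prodSub (N : Submodule (R₁ × R₂) (M₁ × M₂)) :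
    N = prodSub (leftPart N) (rightPart N) := by
  ext ⟨x, y⟩
  simp only [mem_prodSub]
  constructor
  · intro h
    constructor
    · have := N.smul_mem ((1 : R₁), (0 : R₂)) h
      simpa [leftPart] using this
    · have := N.smul_mem ((0 : R₁), (1 : R₂)) h
      simpa [rightPart] using this
  · rintro ⟨hx, hy⟩
    have := N.add_mem hx hy
    simpa using this

theorem zero_smul_sub₁ (N : Submodule R₁ M₁) : (0 : R₁) • N = ⊥ := by
  ext x
  simp only [mem_smul_iff₁, Submodule.mem_bot]
  constructor
  · rintro ⟨y, _, rfl⟩; simp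
  · rintro rfl; exact ⟨0, N.zero_mem, by simp⟩

theorem zero_smul_sub₂ (N : Submodule R₂ M₂) : (0 : R₂) • N = ⊥ := by
  ext x
  simp only [mem_smul_iff₂, Submodule.mem_bot]
  constructor
  · rintro ⟨y, _, rfl⟩; simp
  · rintro rfl; exact ⟨0, N.zero_mem, by simp⟩

theorem isSecond_prodSub_left {S₁ : Submodule R₁ M₁} (h : IsSecond S₁) :
    IsSecond (prodSub S₁ (⊥ : Submodule R₂ M₂)) := by
  constructor
  · intro hb
    exact h.1 (prodSub_eq_bot_iff.mp hb).1
  · intro a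
    rw [smul_prodSub, Submodule.smul_bot']
    rcases h.2 a.1 with ha | ha
    · left; rw [ha]
    · right; rw [ha, prodSub_eq_bot_iff]; exact ⟨rfl, rfl⟩

theorem isSecond_prodSub_right {S₂ : Submodule R₂ M₂} (h : IsSecond S₂) :
    IsSecond (prodSub (⊥ : Submodule R₁ M₁) S₂) := by
  constructor
  · intro hb
    exact h.1 (prodSub_eq_bot_iff.mp hb).2
  · intro a
    rw [smul_prodSub, Submodule.smul_bot']
    rcases h.2 a.2 with ha | ha
    · left; rw [ha]
    · right; rw [ha, prodSub_eq_bot_iff]; exact ⟨rfl, rfl⟩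

theorem isSecond_iff (N : Submodule (R₁ × R₂) (M₁ × M₂)) :
    IsSecond N ↔
      (∃ S₁ : Submodule R₁ M₁, IsSecond S₁ ∧ N = prodSub S₁ ⊥) ∨
      (∃ S₂ : Submodule R₂ M₂, IsSecond S₂ ∧ N = prodSub ⊥ S₂) := by
  constructor
  · rintro ⟨hne, hsmul⟩
    have hN := eq_prodSub N
    set A := leftPart N
    set B := rightPart N
    rcases hsmul ((1 : R₁), (0 : R₂)) with h | h
    · -- e₁ • N = N forces B = ⊥
      rw [hN, smul_prodSub] at h
      simp only at h
      rw [one_smul, zero_smul_sub₂] at h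
      have hB : B = ⊥ := ((prodSub_inj h).2).symm
      left
      refine ⟨A, ⟨?_, ?_⟩, by rw [hN, hB]⟩
      · intro hA
        exact hne (by rw [hN, hA, hB, prodSub_eq_bot_iff]; exact ⟨rfl, rfl⟩)
      · intro a
        rcases hsmul (a, (0 : R₂)) with h' | h'
        · left
          rw [hN, hB, smul_prodSub] at h'
          simp only at h'
          rw [Submodule.smul_bot'] at h'
          exact (prodSub_inj h').1
        · right
          rw [hN, hB, smul_prodSub] at h'
          simp only at h'
          rw [Submodule.smul_bot'] at h'
          exact (prodSub_eq_bot_iff.mp h').1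
    · -- e₁ • N = ⊥ forces A = ⊥
      rw [hN, smul_prodSub] at h
      simp only at h
      rw [one_smul, zero_smul_sub₂] at h
      have hA : A = ⊥ := (prodSub_eq_bot_iff.mp h).1
      right
      refine ⟨B, ⟨?_, ?_⟩, by rw [hN, hA]⟩
      · intro hB
        exact hne (by rw [hN, hA, hB, prodSub_eq_bot_iff]; exact ⟨rfl, rfl⟩)
      · intro b
        rcases hsmul ((0 : R₁), b) with h' | h'
        · left
          rw [hN, hA, smul_prodSub] at h'
          simp only at h'
          rw [Submodule.smul_bot'] at h'
          exact (prodSub_inj h').2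
        · right
          rw [hN, hA, smul_prodSub] at h'
          simp only at h'
          rw [Submodule.smul_bot'] at h'
          exact (prodSub_eq_bot_iff.mp h').2
  · rintro (⟨S₁, hS₁, rfl⟩ | ⟨S₂, hS₂, rfl⟩)
    · exact isSecond_prodSub_left hS₁
    · exact isSecond_prodSub_right hS₂

theorem stmt17 :
    (∀ N : Submodule (R₁ × R₂) (M₁ × M₂),
      (IsSecond N ↔
        (∃ S₁ : Submodule R₁ M₁, IsSecond S₁ ∧ N = prodSub S₁ ⊥) ∨
        (∃ S₂ : Submodule R₂ M₂, IsSecond S₂ ∧ N = prodSub ⊥ S₂))) ∧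
    (∀ (N₁ : Submodule R₁ M₁) (N₂ : Submodule R₂ M₂),
      secRad (prodSub N₁ N₂) = prodSub (secRad N₁) (secRad N₂)) := by
  refine ⟨isSecond_iff, fun N₁ N₂ => le_antisymm ?_ ?_⟩
  · apply sSup_le
    rintro S ⟨hS, hSN⟩
    rcases (isSecond_iff S).mp hS with ⟨S₁, hS₁, rfl⟩ | ⟨S₂, hS₂, rfl⟩
    · have hS₁N : S₁ ≤ N₁ := fun x hx => (hSN (show (x, (0:M₂)) ∈ _ from ⟨hx, rfl⟩)).1
      exact prodSub_mono (le_sSup ⟨hS₁, hS₁N⟩) bot_le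
    · have hS₂N : S₂ ≤ N₂ := fun y hy => (hSN (show ((0:M₁), y) ∈ _ from ⟨rfl, hy⟩)).2
      exact prodSub_mono bot_le (le_sSup ⟨hS₂, hS₂N⟩)
  · have hleft : secRad N₁ ≤ leftPart (secRad (prodSub N₁ N₂)) := by
      apply sSup_le
      rintro S₁ ⟨hS₁, hS₁N⟩
      intro x hx
      have h1 : prodSub S₁ (⊥ : Submodule R₂ M₂) ≤ secRad (prodSub N₁ N₂) :=
        le_sSup ⟨isSecond_prodSub_left hS₁, prodSub_mono hS₁N bot_le⟩
      exact h1 (show (x, (0:M₂)) ∈ _ from ⟨hx, rfl⟩)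
    have hright : secRad N₂ ≤ rightPart (secRad (prodSub N₁ N₂)) := by
      apply sSup_le
      rintro S₂ ⟨hS₂, hS₂N⟩
      intro y hy
      have h1 : prodSub (⊥ : Submodule R₁ M₁) S₂ ≤ secRad (prodSub N₁ N₂) :=
        le_sSup ⟨isSecond_prodSub_right hS₂, prodSub_mono bot_le hS₂N⟩
      exact h1 (show ((0:M₁), y) ∈ _ from ⟨rfl, hy⟩)
    rintro ⟨x, y⟩ ⟨hx, hy⟩
    have h1 : (x, (0:M₂)) ∈ secRad (prodSub N₁ N₂) := hleft hx
    have h2 : ((0:M₁), y) ∈ secRad (prodSub N₁ N₂) := hright hy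
    have := (secRad (prodSub N₁ N₂)).add_mem h1 h2
    simpa using this

end Prod
end
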